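/- Let G = (V, E) be a finite connected simple graph with m edges, and let (G_t)_{t∈ℕ} be a 1-bounded 1-interval connected dynamic graph with footprint G. Then for every start vertex v₀ ∈ V there exists a temporal walk x₀ = v₀, x₁, x₂, … such that every vertex of G appears among x₀, x₁, …, x_{32m²}. (Offline form of the paper's Lemma 1: within the first 8m · 4m = 32m² rounds, one of the two DFS groups visits every node of G.) -/

import Mathlib

open SimpleGraph

lemma cross_lemma {V : Type*} {H : SimpleGraph V} {S : Set V} :
    ∀ {a b : V}, H.Walk a b → a ∈ S → b ∉ S → ∃ x y, x ∈ S ∧ y ∉ S ∧ H.Adj x y := by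
  intro a b p
  induction p with
  | nil => intro ha hb; exact absurd ha hb
  | @cons x y z h p ih =>
    intro ha hb
    by_cases hy : y ∈ S
    · exact ih hy hb
    · exact ⟨x, y, ha, hy, h⟩

lemma card_le_edges {V : Type*} [Fintype V] {G : SimpleGraph V} (hG : G.Connected) (v₀ : V) :
    Fintype.card V ≤ G.edgeSet.ncard + 1 := by
  classical
  -- parent edge for each u ≠ v₀
  have key : ∀ u : V, u ≠ v₀ → ∃ w : V, G.Adj u w ∧ G.dist v₀ w < G.dist v₀ u := by
    intro u hu
    obtain ⟨p, hp⟩ := (hG v₀ u).exists_walk_length_eq_dist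
    obtain ⟨w, h, q, hq⟩ := SimpleGraph.Walk.exists_eq_cons_of_ne hu p.reverse
    refine ⟨w, h, ?_⟩
    have hlen : q.length + 1 = p.length := by
      have := congrArg SimpleGraph.Walk.length hq
      simpa using this.symm
    have hd : G.dist v₀ w ≤ q.reverse.length := SimpleGraph.dist_le _
    simp only [SimpleGraph.Walk.length_reverse] at hd
    omega
  choose w hw hdist using key
  set f : V → Sym2 V := fun u => if h : u = v₀ then s(v₀, v₀) else s(u, w u h) with hf
  have hinj : Set.InjOn f {v₀}ᶜ := by
    intro a ha b hb hab
    simp only [Set.mem_compl_iff, Set.mem_singleton_iff] at ha hb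
    rw [hf] at hab
    simp only [dif_neg ha, dif_neg hb, Sym2.eq, Sym2.rel_iff', Prod.mk.injEq, Prod.swap_prod_mk] at hab
    rcases hab with ⟨h1, h2⟩ | ⟨h1, h2⟩
    · exact h1
    · exfalso
      have d1 := hdist a ha
      have d2 := hdist b hb
      rw [h2] at d1
      rw [← h1] at d2
      omega
  have hmaps : ∀ a ∈ ({v₀}ᶜ : Set V), f a ∈ G.edgeSet := by
    intro a ha
    simp only [Set.mem_compl_iff, Set.mem_singleton_iff] at ha
    rw [hf]; simp only [dif_neg ha]
    exact (hw a ha)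
  have h1 : ({v₀}ᶜ : Set V).ncard ≤ G.edgeSet.ncard := by
    calc ({v₀}ᶜ : Set V).ncard = (f '' {v₀}ᶜ).ncard := (Set.ncard_image_of_injOn hinj).symm
    _ ≤ G.edgeSet.ncard := Set.ncard_le_ncard (by rintro x ⟨a, ha, rfl⟩; exact hmaps a ha) (Set.toFinite _)
  have h2 : ({v₀}ᶜ : Set V).ncard = Fintype.card V - 1 := by
    rw [show Fintype.card V = Nat.card V from Nat.card_eq_fintype_card.symm, ← Set.ncard_univ V]
    rw [show ({v₀}ᶜ : Set V) = Set.univ \ {v₀} by ext; simp]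
    rw [Set.ncard_diff_singleton_of_mem (Set.mem_univ _)]
  have : 0 < Fintype.card V := Fintype.card_pos_iff.mpr ⟨v₀⟩
  omega
lemma cross_lemma' {V : Type*} {H : SimpleGraph V} {S : Set V} :
    ∀ {a b : V}, H.Walk a b → a ∈ S → b ∉ S → ∃ x y, x ∈ S ∧ y ∉ S ∧ H.Adj x y := by
  intro a b p
  induction p with
  | nil => intro ha hb; exact absurd ha hb
  | @cons x y z h p ih =>
    intro ha hb
    by_cases hy : y ∈ S
    · exact ih hy hb
    · exact ⟨x, y, ha, hy, h⟩

lemma reach_lemma {V : Type*} [Fintype V] (Gd : ℕ → SimpleGraph V)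
    (hconn : ∀ t, (Gd t).Connected) (s : ℕ) (v u : V) :
    ∃ f : ℕ → V, f 0 = v ∧ (∀ i, f (i + 1) = f i ∨ (Gd (s + i)).Adj (f i) (f (i + 1))) ∧
      f (Fintype.card V) = u := by
  classical
  set S : ℕ → Set V := fun t => {w | ∃ f : ℕ → V, f 0 = v ∧
    (∀ i, f (i + 1) = f i ∨ (Gd (s + i)).Adj (f i) (f (i + 1))) ∧ f t = w} with hS
  have hv : ∀ t, v ∈ S t := fun t => ⟨fun _ => v, rfl, fun _ => Or.inl rfl, rfl⟩
  have hmono : ∀ t, S t ⊆ S (t + 1) := by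
    intro t w ⟨f, hf0, hfs, hft⟩
    refine ⟨fun i => f (min i t), by simpa using hf0, ?_, by simp [hft]⟩
    intro i
    dsimp only
    rcases lt_or_ge i t with h | h
    · rw [show min i t = i by omega, show min (i+1) t = i+1 by omega]
      exact hfs i
    · rw [show min i t = t by omega, show min (i+1) t = t by omega]
      exact Or.inl rfl
  have hadj : ∀ t a y, a ∈ S t → (Gd (s + t)).Adj a y → y ∈ S (t + 1) := by
    intro t a y ⟨f, hf0, hfs, hft⟩ hA
    refine ⟨fun i => if i ≤ t then f i else y, by simp [hf0], ?_, by simp⟩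
    intro i
    dsimp only
    rcases lt_trichotomy i t with h | h | h
    · rw [if_pos (by omega : i ≤ t), if_pos (by omega : i + 1 ≤ t)]
      exact hfs i
    · subst h
      rw [if_pos le_rfl, if_neg (by omega), hft]
      exact Or.inr hA
    · rw [if_neg (by omega), if_neg (by omega)]
      exact Or.inl rfl
  have hgrow : ∀ t, S t = Set.univ ∨ t + 1 ≤ (S t).ncard := by
    intro t
    induction t with
    | zero =>
      right
      have : (S 0).Nonempty := ⟨v, hv 0⟩
      exact (Set.ncard_pos (Set.toFinite _)).mpr this
    | succ t ih =>
      rcases ih with h | h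
      · left
        exact Set.eq_univ_of_univ_subset (h ▸ hmono t)
      · by_cases hU : S t = Set.univ
        · left; exact Set.eq_univ_of_univ_subset (hU ▸ hmono t)
        · right
          obtain ⟨b, hb⟩ : ∃ b, b ∉ S t := by
            by_contra hc
            push_neg at hc
            exact hU (Set.eq_univ_of_forall hc)
          obtain ⟨p⟩ := (hconn (s + t)) v b
          obtain ⟨x, y, hx, hy, hxy⟩ := cross_lemma' p (hv t) hb
          have hss : S t ⊂ S (t + 1) :=
            ⟨hmono t, fun hsub => hy (hsub (hadj t x y hx hxy))⟩
          have := Set.ncard_lt_ncard hss (Set.toFinite _)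
          omega
  have huniv : S (Fintype.card V) = Set.univ := by
    rcases hgrow (Fintype.card V) with h | h
    · exact h
    · exfalso
      have : (S (Fintype.card V)).ncard ≤ Fintype.card V := by
        rw [← Nat.card_eq_fintype_card, ← Set.ncard_univ V]
        exact Set.ncard_le_ncard (Set.subset_univ _) (Set.toFinite _)
      omega
  have : u ∈ S (Fintype.card V) := huniv ▸ Set.mem_univ u
  exact this



/-- **Offline exploration of a 1-bounded 1-interval connected dynamic graph.**
Let `G` be a finite connected simple graph with `m` edges (the footprint), and let
`Gd t` be the snapshot of a dynamic graph at round `t`, where every snapshot is a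
spanning subgraph of `G`, is connected, and misses at most one edge of `G`.
Then from every start vertex `v₀` there is a temporal walk `x₀ = v₀, x₁, x₂, …`
(at each round either staying put or crossing an edge of the current snapshot)
such that every vertex of `G` appears among `x₀, …, x_{32·m²}`. -/
theorem temporal_exploration {V : Type*} [Fintype V]
    (G : SimpleGraph V) (hG : G.Connected) (m : ℕ) (hm : G.edgeSet.ncard = m)
    (Gd : ℕ → SimpleGraph V)
    (hsub : ∀ t, Gd t ≤ G)
    (hconn : ∀ t, (Gd t).Connected)
    (hbound : ∀ t, (G.edgeSet \ (Gd t).edgeSet).ncard ≤ 1)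
    (v₀ : V) :
    ∃ x : ℕ → V, x 0 = v₀ ∧
      (∀ t, x (t + 1) = x t ∨ (Gd t).Adj (x t) (x (t + 1))) ∧
      ∀ u : V, ∃ t ≤ 32 * m ^ 2, x t = u := by
  classical
  haveI : Nonempty V := ⟨v₀⟩
  rcases Nat.eq_zero_or_pos m with hm0 | hmpos
  · -- no edges: V is a singleton
    subst hm0
    have hempty : G.edgeSet = ∅ := by
      have := Set.ncard_eq_zero (Set.toFinite G.edgeSet) |>.mp hm
      exact this
    have hall : ∀ u : V, u = v₀ := by
      intro u
      obtain ⟨p⟩ := hG u v₀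
      cases p with
      | nil => rfl
      | @cons _ w _ h _ =>
        exfalso
        have : s(u, w) ∈ G.edgeSet := h
        rw [hempty] at this
        exact this
    exact ⟨fun _ => v₀, rfl, fun t => Or.inl rfl,
      fun u => ⟨0, by omega, (hall u).symm⟩⟩
  · set n := Fintype.card V with hn
    have npos : 0 < n := Fintype.card_pos
    have hnm : n ≤ m + 1 := hm ▸ card_le_edges hG v₀
    choose F hF0 hFstep hFn using fun (s : ℕ) (v u : V) => reach_lemma Gd hconn s v u
    set e : ℕ → V := fun i => (Fintype.equivFin V).symm ⟨i % n, Nat.mod_lt _ npos⟩ with he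
    set B : ℕ → (ℕ → V) := fun i =>
      Nat.rec (F 0 v₀ (e 0)) (fun i prev => F ((i + 1) * n) (prev n) (e (i + 1))) i with hB
    have hB0 : B 0 0 = v₀ := hF0 0 v₀ (e 0)
    have hBn : ∀ i, B i n = e i := by
      intro i
      cases i with
      | zero => exact hFn 0 v₀ (e 0)
      | succ i => exact hFn ((i + 1) * n) (B i n) (e (i + 1))
    have hBsucc : ∀ i, B (i + 1) 0 = B i n := fun i => hF0 ((i + 1) * n) (B i n) (e (i + 1))
    have hBstep : ∀ i j, B i (j + 1) = B i j ∨ (Gd (i * n + j)).Adj (B i j) (B i (j + 1)) := by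
      intro i j
      cases i with
      | zero =>
        have h := hFstep 0 v₀ (e 0) j
        rw [Nat.zero_add] at h
        simp only [Nat.zero_mul, Nat.zero_add]; exact h
      | succ i => exact hFstep ((i + 1) * n) (B i n) (e (i + 1)) j
    refine ⟨fun t => B (t / n) (t % n), ?_, ?_, ?_⟩
    · simpa [Nat.zero_div, Nat.zero_mod] using hB0
    · intro t
      set i := t / n with hi
      set j := t % n with hj
      have hjn : j < n := Nat.mod_lt _ npos
      have ht : i * n + j = t := by rw [hi, hj, mul_comm]; exact Nat.div_add_mod t n
      rcases Nat.lt_or_ge (j + 1) n with hc | hc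
      · have hd : (t + 1) / n = i := by
          rw [← ht, show i * n + j + 1 = (j + 1) + i * n by ring,
            Nat.add_mul_div_right _ _ npos, Nat.div_eq_of_lt hc]
          omega
        have hm' : (t + 1) % n = j + 1 := by
          rw [← ht, show i * n + j + 1 = (j + 1) + i * n by ring,
            Nat.add_mul_mod_self_right, Nat.mod_eq_of_lt hc]
        dsimp only
        rw [hd, hm', ← hi, ← hj, ← ht]
        exact hBstep i j
      · have hc' : j + 1 = n := by omega
        have ht1 : t + 1 = (i + 1) * n := by rw [← ht]; ring_nf; omega
        have hd : (t + 1) / n = i + 1 := by rw [ht1, Nat.mul_div_cancel _ npos]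
        have hm' : (t + 1) % n = 0 := by rw [ht1, Nat.mul_mod_left]
        dsimp only
        rw [hd, hm', hBsucc i, ← hi, ← hj, ← ht]
        have := hBstep i j
        rw [hc'] at this
        exact this
    · intro u
      set k : Fin n := Fintype.equivFin V u with hk
      refine ⟨(k.val + 1) * n, ?_, ?_⟩
      · have h1 : (k.val + 1) * n ≤ n * n := Nat.mul_le_mul_right _ (by omega)
        have h2 : n * n ≤ (2 * m) * (2 * m) := Nat.mul_le_mul (by omega) (by omega)
        nlinarith
      · have hd : (k.val + 1) * n / n = k.val + 1 := Nat.mul_div_cancel _ npos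
        have hm' : (k.val + 1) * n % n = 0 := Nat.mul_mod_left _ _
        simp only [hd, hm', hBsucc, hBn]
        rw [he]
        simp only [Nat.mod_eq_of_lt k.isLt]
        rw [hk]
        simp
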